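/- arXiv:0910.1746 — 3 statements merged into one kernel-verified Lean document; each statement's English description precedes it below -/
import Mathlib

section
/- The Al-Salam-Carlitz polynomial U_n(x,y,a;q), defined as the sum over k from 0 to n of [n choose k]_q (-1)^k q^(k choose 2) a^k P_{n-k}(x,y), is symmetric in a and y; that is, U_n(x,y,a;q) = U_n(x,a,y;q). -/
open Finset

noncomputable def qPoch (q a : ℂ) (n : ℕ) : ℂ := ∏ j ∈ Finset.range n, (1 - a * q ^ j)

noncomputable def qPochInf (q a : ℂ) : ℂ := ∏' j : ℕ, (1 - a * q ^ j)

noncomputable def qBinom (q : ℂ) (n k : ℕ) : ℂ := qPoch q q n / (qPoch q q (n - k) * qPoch q q k)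

noncomputable def cauchyP (q x y : ℂ) (n : ℕ) : ℂ := ∏ j ∈ Finset.range n, (x - q ^ j * y)

noncomputable def ascU (q x y a : ℂ) (n : ℕ) : ℂ :=
  ∑ k ∈ Finset.range (n + 1), qBinom q n k * (-1) ^ k * q ^ Nat.choose k 2 * a ^ k * cauchyP q x y (n - k)

namespace AscUAux

variable {q : ℂ}

lemma one_sub_pow_ne (hq : ‖q‖ < 1) (k : ℕ) : (1:ℂ) - q^(k+1) ≠ 0 := by
  intro h
  have : q^(k+1) = 1 := by linear_combination -h
  have h2 : ‖q^(k+1)‖ < 1 := by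
    rw [norm_pow]
    exact pow_lt_one₀ (norm_nonneg q) hq (Nat.succ_ne_zero k)
  rw [this] at h2; simp at h2

lemma qPoch_succ (n : ℕ) : qPoch q q (n+1) = qPoch q q n * (1 - q^(n+1)) := by
  rw [qPoch, Finset.prod_range_succ, ← qPoch, ← pow_succ']

lemma qPoch_ne (hq : ‖q‖ < 1) (n : ℕ) : qPoch q q n ≠ 0 := by
  induction n with
  | zero => simp [qPoch]
  | succ m ih => rw [qPoch_succ]; exact mul_ne_zero ih (one_sub_pow_ne hq m)

lemma qBinom_zero (hq : ‖q‖ < 1) (n : ℕ) : qBinom q n 0 = 1 := by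
  simp [qBinom, qPoch]
  exact qPoch_ne hq n

lemma qBinom_self (hq : ‖q‖ < 1) (n : ℕ) : qBinom q n n = 1 := by
  simp [qBinom]
  rw [show (qPoch q q 0) = 1 by simp [qPoch], one_mul]
  exact div_self (qPoch_ne hq n)

lemma pascal (hq : ‖q‖ < 1) (i d : ℕ) :
    qBinom q (i+d+2) (i+1) = qBinom q (i+d+1) (i+1) + q^(d+1) * qBinom q (i+d+1) i := by
  have e1 : i+d+2 - (i+1) = d+1 := by omega
  have e2 : i+d+1 - (i+1) = d := by omega
  have e3 : i+d+1 - i = d+1 := by omega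
  rw [qBinom, qBinom, qBinom, e1, e2, e3]
  rw [show i+d+2 = (i+d+1)+1 by ring, qPoch_succ, qPoch_succ d, qPoch_succ i]
  have hA := qPoch_ne hq (i+d+1)
  have hB := qPoch_ne hq d
  have hC := qPoch_ne hq i
  have h1 := one_sub_pow_ne hq d
  have h2 := one_sub_pow_ne hq i
  field_simp
  ring

lemma step_aux (f g s : ℕ → ℂ) (m : ℕ)
    (h0 : g 0 = f 0)
    (hkey : ∀ j < m, g (j+1) = f (j+1) - s j)
    (htop : g (m+1) = - s m) :
    ∑ j ∈ range (m+1), f j - ∑ j ∈ range (m+1), s j = ∑ j ∈ range (m+2), g j := by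
  rw [Finset.sum_range_succ' f m, Finset.sum_range_succ s m,
      Finset.sum_range_succ g (m+1), Finset.sum_range_succ' g m,
      Finset.sum_congr rfl (fun j hj => hkey j (mem_range.mp hj)),
      Finset.sum_sub_distrib, h0, htop]
  ring

lemma gauss (hq : ‖q‖ < 1) (x y : ℂ) (m : ℕ) :
    cauchyP q x y m
      = ∑ j ∈ range (m+1), qBinom q m j * (-1)^j * q^(j.choose 2) * y^j * x^(m-j) := by
  induction m with
  | zero => simp [cauchyP, qBinom, qPoch]
  | succ m ih =>
    have hstep : cauchyP q x y (m+1) = cauchyP q x y m * (x - q^m * y) := by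
      rw [cauchyP, Finset.prod_range_succ, ← cauchyP]
    rw [hstep, ih, mul_sub, Finset.sum_mul, Finset.sum_mul]
    have h1 : ∑ j ∈ range (m+1),
        (qBinom q m j * (-1)^j * q^(j.choose 2) * y^j * x^(m-j)) * x
        = ∑ j ∈ range (m+1),
          qBinom q m j * (-1)^j * q^(j.choose 2) * y^j * x^(m+1-j) := by
      refine Finset.sum_congr rfl (fun j hj => ?_)
      have hj' : j ≤ m := Nat.lt_succ_iff.mp (mem_range.mp hj)
      rw [mul_assoc, ← pow_succ, show m - j + 1 = m + 1 - j from by omega]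
    have h2 : ∑ j ∈ range (m+1),
        (qBinom q m j * (-1)^j * q^(j.choose 2) * y^j * x^(m-j)) * (q^m * y)
        = ∑ j ∈ range (m+1),
          qBinom q m j * (-1)^j * q^(j.choose 2) * q^m * y^(j+1) * x^(m-j) := by
      refine Finset.sum_congr rfl (fun j hj => ?_)
      ring
    rw [h1, h2]
    refine step_aux _ _ _ m ?_ ?_ ?_
    · simp [qBinom_zero hq]
    · intro j hjm
      obtain ⟨d, hd⟩ := Nat.exists_eq_add_of_lt hjm
      subst hd
      have e1 : j + d + 1 + 1 = j + d + 2 := by ring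
      have e2 : j + d + 1 + 1 - (j + 1) = d + 1 := by omega
      have e3 : j + d + 1 - j = d + 1 := by omega
      rw [e1, pascal hq j d, ← e1, e2, e3]
      simp only [Nat.choose_succ_succ, Nat.choose_one_right, pow_add]
      ring
    · rw [qBinom_self hq, qBinom_self hq]
      simp only [Nat.sub_self, pow_zero,
        Nat.choose_succ_succ, Nat.choose_one_right, pow_add]
      ring

lemma trinom (hq : ‖q‖ < 1) (k j d : ℕ) :
    qBinom q (k+j+d) k * qBinom q (k+j+d-k) j
      = qPoch q q (k+j+d) / (qPoch q q k * qPoch q q j * qPoch q q d) := by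
  have e1 : k+j+d-k = j+d := by omega
  have e2 : j+d-j = d := by omega
  rw [e1, qBinom, qBinom, e1, e2]
  have h1 := qPoch_ne hq (j+d)
  have h2 := qPoch_ne hq k
  have h3 := qPoch_ne hq j
  have h4 := qPoch_ne hq d
  field_simp

lemma trinom_symm (hq : ‖q‖ < 1) {n k j : ℕ} (h : k + j ≤ n) :
    qBinom q n k * qBinom q (n-k) j = qBinom q n j * qBinom q (n-j) k := by
  obtain ⟨d, hd⟩ := Nat.exists_eq_add_of_le h
  subst hd
  have h2 := trinom hq j k d
  rw [show j+k+d = k+j+d from by ring] at h2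
  calc qBinom q (k+j+d) k * qBinom q (k+j+d-k) j
      = qPoch q q (k+j+d) / (qPoch q q k * qPoch q q j * qPoch q q d) := trinom hq k j d
    _ = qPoch q q (k+j+d) / (qPoch q q j * qPoch q q k * qPoch q q d) := by ring_nf
    _ = qBinom q (k+j+d) j * qBinom q (k+j+d-j) k := h2.symm

lemma tri_swap (f : ℕ → ℕ → ℂ) (n : ℕ) :
    ∑ k ∈ range (n+1), ∑ j ∈ range (n-k+1), f k j
      = ∑ j ∈ range (n+1), ∑ k ∈ range (n-j+1), f k j := by
  rw [Finset.sum_sigma', Finset.sum_sigma']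
  refine sum_nbij' (fun x ↦ ⟨x.2, x.1⟩) (fun x ↦ ⟨x.2, x.1⟩) ?_ ?_ (fun _ _ ↦ rfl) (fun _ _ ↦ rfl)
    (fun _ _ ↦ rfl) <;>
  simp only [Finset.mem_range, Sigma.forall, Finset.mem_sigma] <;>
  rintro a b ⟨h₁, h₂⟩ <;>
  constructor <;> omega

lemma ascU_expand (hq : ‖q‖ < 1) (x y a : ℂ) (n : ℕ) :
    ascU q x y a n
      = ∑ k ∈ range (n+1), ∑ j ∈ range (n-k+1),
          (qBinom q n k * qBinom q (n-k) j) *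
            ((-1)^k * (-1)^j * q^(k.choose 2) * q^(j.choose 2) * a^k * y^j * x^(n-k-j)) := by
  rw [ascU]
  refine Finset.sum_congr rfl (fun k hk => ?_)
  rw [gauss hq x y (n-k), Finset.mul_sum]
  refine Finset.sum_congr rfl (fun j hj => ?_)
  ring

end AscUAux

theorem stmt0 (q x y a : ℂ) (hq0 : 0 < ‖q‖) (hq1 : ‖q‖ < 1) (n : ℕ) :
    ascU q x y a n = ascU q x a y n := by
  rw [AscUAux.ascU_expand hq1 x y a n, AscUAux.ascU_expand hq1 x a y n]
  rw [AscUAux.tri_swap]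
  refine Finset.sum_congr rfl (fun j hj => Finset.sum_congr rfl (fun k hk => ?_))
  have hj' : j ≤ n := Nat.lt_succ_iff.mp (Finset.mem_range.mp hj)
  have hk' : k ≤ n - j := Nat.lt_succ_iff.mp (Finset.mem_range.mp hk)
  have hkj : k + j ≤ n := by omega
  rw [AscUAux.trinom_symm hq1 hkj, show n - k - j = n - j - k from by omega]
  ring
end

section
/- For |q|<1 and |xt|<1, the Al-Salam-Carlitz polynomials satisfy the generating function identity \sum_{n=0}^\infty U_n(x,y,a;q) t^n/(q;q)_n = (at;q)_\infty (yt;q)_\infty / (xt;q)_\infty. -/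
open Finset

open Filter Complex

lemma qPoch_succ (q a : ℂ) (n : ℕ) : qPoch q a (n + 1) = qPoch q a n * (1 - a * q ^ n) :=
  Finset.prod_range_succ _ _

lemma cauchyP_succ (q x y : ℂ) (n : ℕ) :
    cauchyP q x y (n + 1) = cauchyP q x y n * (x - q ^ n * y) :=
  Finset.prod_range_succ _ _

lemma one_sub_ne {w : ℂ} (h : ‖w‖ < 1) : (1 : ℂ) - w ≠ 0 := by
  intro h0
  have hw : w = 1 := by have := sub_eq_zero.mp h0; simp [this.symm]
  rw [hw] at h; simp at h

lemma qPoch_q_ne (q : ℂ) (hq1 : ‖q‖ < 1) (n : ℕ) : qPoch q q n ≠ 0 := by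
  refine Finset.prod_ne_zero_iff.mpr fun j _ => one_sub_ne ?_
  rw [← pow_succ']
  calc ‖q ^ (j+1)‖ = ‖q‖ ^ (j+1) := norm_pow q (j+1)
    _ ≤ ‖q‖ ^ 1 := pow_le_pow_of_le_one (norm_nonneg q) hq1.le (by omega)
    _ < 1 := by simpa using hq1

/-- summability of the basic series -/

lemma sumF (q x y t : ℂ) (hq1 : ‖q‖ < 1) (hxt : ‖x * t‖ < 1) :
    Summable (fun n => ‖cauchyP q x y n * t ^ n / qPoch q q n‖) := by
  have hq0 : ‖q‖ < 1 := hq1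
  set r : ℝ := (1 + ‖x * t‖) / 2 with hr
  have hr1 : r < 1 := by rw [hr]; linarith
  have hr0 : ‖x * t‖ < r := by rw [hr]; linarith [norm_nonneg (x * t)]
  apply summable_of_ratio_norm_eventually_le hr1
  -- show eventual ratio bound
  have hq : Tendsto (fun n : ℕ => q ^ n) atTop (nhds 0) :=
    tendsto_pow_atTop_nhds_zero_of_norm_lt_one hq1
  have hnum : Tendsto (fun n : ℕ => ‖(x - q ^ n * y) * t‖) atTop (nhds ‖x * t‖) := by
    have : Tendsto (fun n : ℕ => (x - q ^ n * y) * t) atTop (nhds (x * t)) := by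
      have := ((hq.mul_const y).const_sub x).mul_const t
      simpa using this
    exact this.norm
  have hden : Tendsto (fun n : ℕ => ‖(1 : ℂ) - q ^ (n + 1)‖) atTop (nhds 1) := by
    have h2 : Tendsto (fun n : ℕ => (1 : ℂ) - q ^ (n + 1)) atTop (nhds 1) := by
      have := ((hq.comp (tendsto_add_atTop_nat 1))).const_sub (1 : ℂ)
      simpa using this
    simpa using h2.norm
  have hrat : Tendsto (fun n : ℕ => ‖(x - q ^ n * y) * t‖ / ‖(1 : ℂ) - q ^ (n + 1)‖)
      atTop (nhds ‖x * t‖) := by have h := hnum.div hden one_ne_zero; rw [div_one] at h; exact h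
  have hev : ∀ᶠ n : ℕ in atTop, ‖(x - q ^ n * y) * t‖ / ‖(1 : ℂ) - q ^ (n + 1)‖ ≤ r :=
    (hrat.eventually_le_const hr0)
  filter_upwards [hev] with n hn
  have hden0 : ((1 : ℂ) - q ^ (n + 1)) ≠ 0 := by
    apply one_sub_ne
    calc ‖q ^ (n+1)‖ = ‖q‖ ^ (n+1) := norm_pow q (n+1)
      _ ≤ ‖q‖ ^ 1 := pow_le_pow_of_le_one (norm_nonneg q) hq1.le (by omega)
      _ < 1 := by simpa using hq1
  have key : cauchyP q x y (n+1) * t ^ (n+1) / qPoch q q (n+1)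
      = (cauchyP q x y n * t ^ n / qPoch q q n) * ((x - q ^ n * y) * t / (1 - q ^ (n+1))) := by
    rw [cauchyP_succ, qPoch_succ, pow_succ]
    have h1 : qPoch q q n ≠ 0 := qPoch_q_ne q hq1 n
    have : (1 : ℂ) - q * q ^ n = 1 - q ^ (n+1) := by ring
    rw [this]
    field_simp
  rw [norm_norm, norm_norm, key, norm_mul]
  have hn' : ‖(x - q ^ n * y) * t / (1 - q ^ (n+1))‖ ≤ r := by rw [norm_div]; exact hn
  have h0 : (0:ℝ) ≤ ‖cauchyP q x y n * t ^ n / qPoch q q n‖ := norm_nonneg _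
  calc ‖cauchyP q x y n * t ^ n / qPoch q q n‖ * ‖(x - q ^ n * y) * t / (1 - q ^ (n+1))‖
      ≤ ‖cauchyP q x y n * t ^ n / qPoch q q n‖ * r := mul_le_mul_of_nonneg_left hn' h0
    _ = r * ‖cauchyP q x y n * t ^ n / qPoch q q n‖ := mul_comm _ _

lemma hq_shrink (q x z : ℂ) (hq1 : ‖q‖ < 1) (hxz : ‖x * z‖ < 1) : ‖x * (q * z)‖ < 1 := by
  have : x * (q * z) = q * (x * z) := by ring
  rw [this, norm_mul]
  calc ‖q‖ * ‖x * z‖ ≤ 1 * ‖x * z‖ :=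
        mul_le_mul_of_nonneg_right hq1.le (norm_nonneg _)
    _ = ‖x * z‖ := one_mul _
    _ < 1 := hxz

lemma one_sub_qpow_ne (q : ℂ) (hq1 : ‖q‖ < 1) (n : ℕ) : (1:ℂ) - q ^ (n+1) ≠ 0 := by
  intro h0
  have hw : q ^ (n+1) = 1 := by have := sub_eq_zero.mp h0; simp [this.symm]
  have : ‖q ^ (n+1)‖ < 1 := by
    rw [norm_pow]
    calc ‖q‖ ^ (n+1) ≤ ‖q‖ ^ 1 := pow_le_pow_of_le_one (norm_nonneg q) hq1.le (by omega)
      _ < 1 := by simpa using hq1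
  rw [hw] at this; simp at this

lemma funEq (q x y z : ℂ) (hq1 : ‖q‖ < 1) (hxz : ‖x * z‖ < 1) :
    (1 - x * z) * (∑' n : ℕ, cauchyP q x y n * z ^ n / qPoch q q n)
      = (1 - y * z) * (∑' n : ℕ, cauchyP q x y n * (q * z) ^ n / qPoch q q n) := by
  have hxz2 : ‖x * (q * z)‖ < 1 := hq_shrink q x z hq1 hxz
  have h1 : Summable (fun n : ℕ => cauchyP q x y n * z ^ n / qPoch q q n) :=
    (sumF q x y z hq1 hxz).of_norm
  have h2 : Summable (fun n : ℕ => cauchyP q x y n * (q * z) ^ n / qPoch q q n) :=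
    (sumF q x y (q * z) hq1 hxz2).of_norm
  set S1 := ∑' n : ℕ, cauchyP q x y n * z ^ n / qPoch q q n with hS1
  set S2 := ∑' n : ℕ, cauchyP q x y n * (q * z) ^ n / qPoch q q n with hS2
  set c : ℕ → ℂ := fun n => cauchyP q x y n * z ^ n * (1 - q ^ n) / qPoch q q n with hc
  have hceq : ∀ n, c n = cauchyP q x y n * z ^ n / qPoch q q n
      - cauchyP q x y n * (q * z) ^ n / qPoch q q n := by
    intro n
    have hP : qPoch q q n ≠ 0 := qPoch_q_ne q hq1 n
    rw [hc]
    field_simp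
    ring
  have hcs : Summable c := by
    apply Summable.congr (h1.sub h2)
    intro n; rw [hceq n]
  have hcterm : ∀ n : ℕ, c (n + 1) = cauchyP q x y (n+1) * z ^ (n+1) / qPoch q q n := by
    intro n
    have hP : qPoch q q n ≠ 0 := qPoch_q_ne q hq1 n
    have hP1 : (1:ℂ) - q * q ^ n ≠ 0 := by
      have := one_sub_qpow_ne q hq1 n
      rwa [pow_succ'] at this
    rw [hc]; simp only [qPoch_succ]
    have hq' : (1:ℂ) - q ^ (n+1) = 1 - q * q ^ n := by rw [pow_succ']
    rw [hq']
    field_simp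
  have hA : S1 - S2 = ∑' n : ℕ, cauchyP q x y (n+1) * z ^ (n+1) / qPoch q q n := by
    rw [hS1, hS2, ← Summable.tsum_sub h1 h2]
    rw [← tsum_congr hceq]
    rw [Summable.tsum_eq_zero_add hcs]
    have hc0 : c 0 = 0 := by simp [hc]
    rw [hc0, zero_add]
    exact tsum_congr hcterm
  have hB : x * z * S1 - y * z * S2
      = ∑' n : ℕ, cauchyP q x y (n+1) * z ^ (n+1) / qPoch q q n := by
    rw [hS1, hS2, ← tsum_mul_left, ← tsum_mul_left, ← Summable.tsum_sub (h1.mul_left _) (h2.mul_left _)]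
    apply tsum_congr
    intro n
    have hP : qPoch q q n ≠ 0 := qPoch_q_ne q hq1 n
    rw [cauchyP_succ, mul_pow]
    field_simp
    ring
  linear_combination hA - hB

lemma exists_small (q z : ℂ) (hq1 : ‖q‖ < 1) : ∃ N : ℕ, ‖z‖ * ‖q‖ ^ N ≤ 1/2 := by
  have h : Tendsto (fun n : ℕ => ‖z‖ * ‖q‖ ^ n) atTop (nhds (‖z‖ * 0)) :=
    (tendsto_pow_atTop_nhds_zero_of_lt_one (norm_nonneg q) hq1).const_mul ‖z‖
  rw [mul_zero] at h
  have := (h.eventually_le_const (by norm_num : (0:ℝ) < 1/2)).exists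
  exact this

lemma log_summable (q z : ℂ) (hq1 : ‖q‖ < 1) :
    Summable (fun j : ℕ => Complex.log (1 - z * q ^ j)) := by
  obtain ⟨N, hN⟩ := exists_small q z hq1
  rw [← summable_nat_add_iff N]
  have hbound : ∀ j : ℕ, ‖Complex.log (1 - z * q ^ (j + N))‖ ≤ (3/2) * (1/2 * ‖q‖ ^ j) := by
    intro j
    have hsm : ‖-(z * q ^ (j + N))‖ ≤ 1/2 * ‖q‖ ^ j := by
      rw [norm_neg, norm_mul, norm_pow, pow_add, mul_comm (‖q‖^j)]
      rw [← mul_assoc]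
      exact mul_le_mul_of_nonneg_right hN (pow_nonneg (norm_nonneg q) j)
    have hsm2 : ‖-(z * q ^ (j + N))‖ ≤ 1/2 := by
      refine hsm.trans ?_
      have : ‖q‖ ^ j ≤ 1 := pow_le_one₀ (norm_nonneg q) hq1.le
      nlinarith
    have := Complex.norm_log_one_add_half_le_self hsm2
    rw [← sub_eq_add_neg] at this
    refine this.trans ?_
    exact mul_le_mul_of_nonneg_left hsm (by norm_num)
  apply Summable.of_norm_bounded ?_ hbound
  exact ((summable_geometric_of_lt_one (norm_nonneg q) hq1).mul_left _).mul_left _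

lemma multipliable_qp (q z : ℂ) (hq1 : ‖q‖ < 1) :
    Multipliable (fun j : ℕ => 1 - z * q ^ j) := by
  obtain ⟨N, hN⟩ := exists_small q z hq1
  apply Multipliable.comp_nat_add (k := N)
  have hfn : ∀ (_ : Unit) (j : ℕ), (1 : ℂ) - z * q ^ (j + N) ≠ 0 := by
    intro _ j
    intro h0
    have hw : z * q ^ (j + N) = 1 := by have := sub_eq_zero.mp h0; simp [this.symm]
    have : ‖z * q ^ (j + N)‖ ≤ 1/2 := by
      rw [norm_mul, norm_pow, pow_add, mul_comm (‖q‖^j), ← mul_assoc]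
      have h1 : ‖z‖ * ‖q‖ ^ N * ‖q‖ ^ j ≤ 1/2 * ‖q‖ ^ j :=
        mul_le_mul_of_nonneg_right hN (pow_nonneg (norm_nonneg q) j)
      have h2 : ‖q‖ ^ j ≤ 1 := pow_le_one₀ (norm_nonneg q) hq1.le
      nlinarith [pow_nonneg (norm_nonneg q) j]
    rw [hw] at this; norm_num at this
  have hf : ∀ (_ : Unit), Summable (fun j : ℕ => Complex.log (1 - z * q ^ (j + N))) := by
    intro _
    have := log_summable q (z * q ^ N) hq1
    apply this.congr
    intro j
    congr 1
    ring
  exact Complex.multipliable_of_summable_log (hf ())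

lemma qPochInf_ne (q w : ℂ) (hq1 : ‖q‖ < 1) (hw : ‖w‖ < 1) : qPochInf q w ≠ 0 := by
  have hfn : ∀ (_ : Unit) (j : ℕ), (1 : ℂ) - w * q ^ j ≠ 0 := by
    intro _ j h0
    have hw1 : w * q ^ j = 1 := by have := sub_eq_zero.mp h0; simp [this.symm]
    have : ‖w * q ^ j‖ < 1 := by
      rw [norm_mul, norm_pow]
      calc ‖w‖ * ‖q‖ ^ j ≤ ‖w‖ * 1 :=
            mul_le_mul_of_nonneg_left (pow_le_one₀ (norm_nonneg q) hq1.le) (norm_nonneg w)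
        _ = ‖w‖ := mul_one _
        _ < 1 := hw
    rw [hw1] at this; norm_num at this
  have := Complex.cexp_tsum_eq_tprod (f := fun j : ℕ => 1 - w * q ^ j) (hfn ())
    (log_summable q w hq1)
  rw [qPochInf, ← this]
  exact Complex.exp_ne_zero _

lemma tendsto_qPoch (q z : ℂ) (hq1 : ‖q‖ < 1) :
    Tendsto (fun n : ℕ => qPoch q z n) atTop (nhds (qPochInf q z)) :=
  (multipliable_qp q z hq1).hasProd.tendsto_prod_nat

lemma norm_shrink (q x t : ℂ) (hq1 : ‖q‖ < 1) (hxt : ‖x * t‖ < 1) (n : ℕ) :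
    ‖x * (q ^ n * t)‖ < 1 := by
  have h : x * (q ^ n * t) = q ^ n * (x * t) := by ring
  rw [h, norm_mul, norm_pow]
  calc ‖q‖ ^ n * ‖x * t‖ ≤ 1 * ‖x * t‖ :=
        mul_le_mul_of_nonneg_right (pow_le_one₀ (norm_nonneg q) hq1.le) (norm_nonneg _)
    _ = ‖x * t‖ := one_mul _
    _ < 1 := hxt

lemma iterEq (q x y t : ℂ) (hq1 : ‖q‖ < 1) (hxt : ‖x * t‖ < 1) (n : ℕ) :
    qPoch q (x * t) n * (∑' m : ℕ, cauchyP q x y m * t ^ m / qPoch q q m)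
      = qPoch q (y * t) n * (∑' m : ℕ, cauchyP q x y m * (q ^ n * t) ^ m / qPoch q q m) := by
  induction n with
  | zero => simp [qPoch]
  | succ n ih =>
    have hz : ‖x * (q ^ n * t)‖ < 1 := norm_shrink q x t hq1 hxt n
    have hfe := funEq q x y (q ^ n * t) hq1 hz
    have harg : ∀ m : ℕ, cauchyP q x y m * (q * (q ^ n * t)) ^ m / qPoch q q m
        = cauchyP q x y m * (q ^ (n+1) * t) ^ m / qPoch q q m := by
      intro m; congr 2; ring
    rw [tsum_congr harg] at hfe
    have hx' : 1 - x * (q ^ n * t) = 1 - (x * t) * q ^ n := by ring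
    have hy' : 1 - y * (q ^ n * t) = 1 - (y * t) * q ^ n := by ring
    rw [hx', hy'] at hfe
    rw [qPoch_succ, qPoch_succ]
    calc qPoch q (x*t) n * (1 - (x*t) * q ^ n) * (∑' m : ℕ, cauchyP q x y m * t ^ m / qPoch q q m)
        = (1 - (x*t) * q ^ n) * (qPoch q (x*t) n * (∑' m : ℕ, cauchyP q x y m * t ^ m / qPoch q q m)) := by ring
      _ = (1 - (x*t) * q ^ n) * (qPoch q (y*t) n * (∑' m : ℕ, cauchyP q x y m * (q ^ n * t) ^ m / qPoch q q m)) := by rw [ih]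
      _ = qPoch q (y*t) n * ((1 - (x*t) * q ^ n) * (∑' m : ℕ, cauchyP q x y m * (q ^ n * t) ^ m / qPoch q q m)) := by ring
      _ = qPoch q (y*t) n * ((1 - (y*t) * q ^ n) * (∑' m : ℕ, cauchyP q x y m * (q ^ (n+1) * t) ^ m / qPoch q q m)) := by rw [hfe]
      _ = qPoch q (y*t) n * (1 - (y*t) * q ^ n) * (∑' m : ℕ, cauchyP q x y m * (q ^ (n+1) * t) ^ m / qPoch q q m) := by ring

lemma term_bound (q x y t : ℂ) (hq1 : ‖q‖ < 1) (n k : ℕ) :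
    ‖cauchyP q x y (k+1) * (q ^ n * t) ^ (k+1) / qPoch q q (k+1)‖
      ≤ ‖q‖ ^ n * ‖cauchyP q x y (k+1) * t ^ (k+1) / qPoch q q (k+1)‖ := by
  have hpow : ‖(q ^ n * t) ^ (k+1)‖ ≤ ‖q‖ ^ n * ‖t ^ (k+1)‖ := by
    rw [mul_pow, norm_mul, norm_pow, norm_pow, norm_pow, ← pow_mul]
    apply mul_le_mul_of_nonneg_right _ (pow_nonneg (norm_nonneg t) _)
    calc ‖q‖ ^ (n * (k+1)) ≤ ‖q‖ ^ (n * 1) :=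
          pow_le_pow_of_le_one (norm_nonneg q) hq1.le (Nat.mul_le_mul_left _ (by omega))
      _ = ‖q‖ ^ n := by rw [mul_one]
  rw [norm_div, norm_mul, norm_div, norm_mul]
  calc ‖cauchyP q x y (k+1)‖ * ‖(q ^ n * t) ^ (k+1)‖ / ‖qPoch q q (k+1)‖
      ≤ ‖cauchyP q x y (k+1)‖ * (‖q‖ ^ n * ‖t ^ (k+1)‖) / ‖qPoch q q (k+1)‖ := by
        gcongr
    _ = ‖q‖ ^ n * (‖cauchyP q x y (k+1)‖ * ‖t ^ (k+1)‖ / ‖qPoch q q (k+1)‖) := by ring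

set_option maxHeartbeats 1000000 in
lemma tendsto_S_one (q x y t : ℂ) (hq1 : ‖q‖ < 1) (hxt : ‖x * t‖ < 1) :
    Tendsto (fun n : ℕ => ∑' m : ℕ, cauchyP q x y m * (q ^ n * t) ^ m / qPoch q q m)
      atTop (nhds 1) := by
  set C : ℝ := ∑' k : ℕ, ‖cauchyP q x y (k+1) * t ^ (k+1) / qPoch q q (k+1)‖ with hC
  have hCsum : Summable (fun k : ℕ => ‖cauchyP q x y (k+1) * t ^ (k+1) / qPoch q q (k+1)‖) :=
    (summable_nat_add_iff 1).mpr (sumF q x y t hq1 hxt)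
  rw [tendsto_iff_norm_sub_tendsto_zero]
  apply squeeze_zero (fun n => norm_nonneg _) (g := fun n : ℕ => ‖q‖ ^ n * C)
  · intro n
    have hzn : ‖x * (q ^ n * t)‖ < 1 := norm_shrink q x t hq1 hxt n
    have hsum_n : Summable (fun m : ℕ => cauchyP q x y m * (q ^ n * t) ^ m / qPoch q q m) :=
      (sumF q x y (q ^ n * t) hq1 hzn).of_norm
    have hsum_n1 : Summable (fun k : ℕ => ‖cauchyP q x y (k+1) * (q ^ n * t) ^ (k+1) / qPoch q q (k+1)‖) :=
      (summable_nat_add_iff 1).mpr (sumF q x y (q ^ n * t) hq1 hzn)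
    have h0term : cauchyP q x y 0 * (q ^ n * t) ^ 0 / qPoch q q 0 = 1 := by
      simp [cauchyP, qPoch]
    have hsplit : (∑' m : ℕ, cauchyP q x y m * (q ^ n * t) ^ m / qPoch q q m)
        = 1 + ∑' k : ℕ, cauchyP q x y (k+1) * (q ^ n * t) ^ (k+1) / qPoch q q (k+1) := by
      rw [Summable.tsum_eq_zero_add hsum_n, h0term]
    rw [hsplit, add_sub_cancel_left]
    have step1 : ‖∑' k : ℕ, cauchyP q x y (k+1) * (q ^ n * t) ^ (k+1) / qPoch q q (k+1)‖
        ≤ ∑' k : ℕ, ‖cauchyP q x y (k+1) * (q ^ n * t) ^ (k+1) / qPoch q q (k+1)‖ :=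
      norm_tsum_le_tsum_norm hsum_n1
    have step2 : (∑' k : ℕ, ‖cauchyP q x y (k+1) * (q ^ n * t) ^ (k+1) / qPoch q q (k+1)‖)
        ≤ ∑' k : ℕ, ‖q‖ ^ n * ‖cauchyP q x y (k+1) * t ^ (k+1) / qPoch q q (k+1)‖ :=
      Summable.tsum_le_tsum (fun k => term_bound q x y t hq1 n k) hsum_n1 (hCsum.mul_left _)
    have step3 : (∑' k : ℕ, ‖q‖ ^ n * ‖cauchyP q x y (k+1) * t ^ (k+1) / qPoch q q (k+1)‖)
        = ‖q‖ ^ n * C := tsum_mul_left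
    linarith
  · have := (tendsto_pow_atTop_nhds_zero_of_lt_one (norm_nonneg q) hq1).mul_const C
    simpa using this

lemma genFn (q x y t : ℂ) (hq1 : ‖q‖ < 1) (hxt : ‖x * t‖ < 1) :
    ∑' n : ℕ, cauchyP q x y n * t ^ n / qPoch q q n
      = qPochInf q (y * t) / qPochInf q (x * t) := by
  set S := ∑' n : ℕ, cauchyP q x y n * t ^ n / qPoch q q n with hS
  have hL : Tendsto (fun n : ℕ => qPoch q (x * t) n * S) atTop (nhds (qPochInf q (x * t) * S)) :=
    (tendsto_qPoch q (x * t) hq1).mul_const S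
  have hR : Tendsto (fun n : ℕ => qPoch q (y * t) n
      * (∑' m : ℕ, cauchyP q x y m * (q ^ n * t) ^ m / qPoch q q m)) atTop
      (nhds (qPochInf q (y * t) * 1)) :=
    (tendsto_qPoch q (y * t) hq1).mul (tendsto_S_one q x y t hq1 hxt)
  have hL' : Tendsto (fun n : ℕ => qPoch q (x * t) n * S) atTop (nhds (qPochInf q (y * t) * 1)) := by
    apply hR.congr
    intro n
    exact (iterEq q x y t hq1 hxt n).symm
  have hEq : qPochInf q (x * t) * S = qPochInf q (y * t) * 1 := tendsto_nhds_unique hL hL'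
  have hne : qPochInf q (x * t) ≠ 0 := qPochInf_ne q (x * t) hq1 hxt
  rw [eq_div_iff hne]
  linear_combination hEq

lemma cauchyP_zero_left (q a : ℂ) (k : ℕ) :
    cauchyP q 0 a k = (-1) ^ k * q ^ Nat.choose k 2 * a ^ k := by
  rw [cauchyP]
  calc (∏ j ∈ Finset.range k, ((0:ℂ) - q ^ j * a))
      = ∏ j ∈ Finset.range k, (-1) * (q ^ j * a) := by
        apply Finset.prod_congr rfl; intro j _; ring
    _ = (-1) ^ k * ∏ j ∈ Finset.range k, (q ^ j * a) := by
        rw [Finset.prod_mul_distrib, Finset.prod_const, Finset.card_range]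
    _ = (-1) ^ k * ((∏ j ∈ Finset.range k, q ^ j) * a ^ k) := by
        rw [Finset.prod_mul_distrib, Finset.prod_const, Finset.card_range]
    _ = (-1) ^ k * q ^ Nat.choose k 2 * a ^ k := by
        rw [Finset.prod_pow_eq_pow_sum, Finset.sum_range_id, Nat.choose_two_right]; ring

lemma ascU_term (q x y a t : ℂ) (hq1 : ‖q‖ < 1) (n : ℕ) :
    ascU q x y a n * t ^ n / qPoch q q n
      = ∑ k ∈ Finset.range (n + 1),
          (cauchyP q 0 a k * t ^ k / qPoch q q k)
            * (cauchyP q x y (n - k) * t ^ (n - k) / qPoch q q (n - k)) := by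
  rw [ascU, Finset.sum_mul, Finset.sum_div]
  apply Finset.sum_congr rfl
  intro k hk
  have hkn : k ≤ n := by simpa [Nat.lt_succ_iff] using Finset.mem_range.mp hk
  have ht : t ^ k * t ^ (n - k) = t ^ n := by
    rw [← pow_add]; congr 1; omega
  rw [cauchyP_zero_left, qBinom, ← ht]
  have h1 : qPoch q q n ≠ 0 := qPoch_q_ne q hq1 n
  have h2 : qPoch q q (n - k) ≠ 0 := qPoch_q_ne q hq1 _
  have h3 : qPoch q q k ≠ 0 := qPoch_q_ne q hq1 k
  field_simp

theorem stmt2 (q x y a t : ℂ) (hq0 : 0 < ‖q‖) (hq1 : ‖q‖ < 1) (hxt : ‖x * t‖ < 1) :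
    ∑' n : ℕ, ascU q x y a n * t ^ n / qPoch q q n =
      qPochInf q (a * t) * qPochInf q (y * t) / qPochInf q (x * t) := by
  have h0t : ‖(0:ℂ) * t‖ < 1 := by simp
  have hf := sumF q 0 a t hq1 h0t
  have hg := sumF q x y t hq1 hxt
  rw [tsum_congr (ascU_term q x y a t hq1)]
  rw [← tsum_mul_tsum_eq_tsum_sum_range_of_summable_norm hf hg]
  rw [genFn q 0 a t hq1 h0t, genFn q x y t hq1 hxt]
  have hz : qPochInf q (0 * t) = 1 := by
    simp [qPochInf]
  rw [hz, div_one, mul_div_assoc]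
end

section
/- The Al-Salam-Carlitz polynomial satisfies the relation U_n(x,y,a;q) = (-1)^n q^{\binom{n}{2}} a^n h_n(y/a, x/a | q^{-1}), where h_n(x,y|q) is the bivariate Rogers-Szegő polynomial, provided a ≠ 0 and q ≠ 0. -/
open Finset

noncomputable def rsH (q x y : ℂ) (n : ℕ) : ℂ :=
  ∑ k ∈ Finset.range (n + 1), qBinom q n k * cauchyP q x y k

lemma choose2_succ (m : ℕ) : (m+1).choose 2 = m.choose 2 + m := by
  rw [Nat.choose_succ_succ, Nat.choose_one_right]
  exact Nat.add_comm _ _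

lemma choose2_add (j m : ℕ) : (j+m).choose 2 = j.choose 2 + m.choose 2 + j*m := by
  induction m with
  | zero => simp
  | succ m ih =>
    rw [show j + (m+1) = (j+m)+1 by omega, choose2_succ, ih, choose2_succ]
    ring

lemma div_split (c1 c2 c3 A B C : ℂ) :
    (c1*A)/(c2*B*(c3*C)) = (c1/(c2*c3)) * (A/(B*C)) := by
  rw [show c2*B*(c3*C) = (c2*c3)*(B*C) by ring, mul_div_mul_comm]

lemma poch_inv (q : ℂ) (hq : q ≠ 0) (m : ℕ) :
    qPoch q q m = (-1)^m * q^((m+1).choose 2) * qPoch q⁻¹ q⁻¹ m := by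
  induction m with
  | zero => simp [qPoch]
  | succ m ih =>
    unfold qPoch at *
    rw [Finset.prod_range_succ, Finset.prod_range_succ, ih, choose2_succ (m+1), pow_add]
    have h1 : q^(m+1) * (q⁻¹)^(m+1) = 1 := by
      rw [← mul_pow, mul_inv_cancel₀ hq, one_pow]
    have key : 1 - q * q^m = -(q^(m+1)) * (1 - q⁻¹ * (q⁻¹)^m) := by
      linear_combination -h1
    rw [key, pow_succ]
    ring

lemma cauchy_inv (q x y a : ℂ) (hq : q ≠ 0) (ha : a ≠ 0) (m : ℕ) :
    cauchyP q x y m = (-1)^m * q^(m.choose 2) * a^m * cauchyP q⁻¹ (y/a) (x/a) m := by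
  induction m with
  | zero => simp [cauchyP]
  | succ m ih =>
    unfold cauchyP at *
    rw [Finset.prod_range_succ, Finset.prod_range_succ, ih, choose2_succ m, pow_add]
    have h1 : q^m * (q⁻¹)^m = 1 := by rw [← mul_pow, mul_inv_cancel₀ hq, one_pow]
    have h2 : a * a⁻¹ = 1 := mul_inv_cancel₀ ha
    have key : x - q^m * y = -(q^m) * a * (y/a - (q⁻¹)^m * (x/a)) := by
      field_simp
      linear_combination (-x) * h1
    rw [key, pow_succ]
    ring

lemma qBinom_symm (q : ℂ) (j m : ℕ) : qBinom q (j+m) m = qBinom q (j+m) j := by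
  unfold qBinom
  rw [Nat.add_sub_cancel, Nat.add_sub_cancel_left, mul_comm]

lemma qBinom_inv (q : ℂ) (hq : q ≠ 0) (j m : ℕ) :
    qBinom q⁻¹ (j+m) j = (q⁻¹)^(j*m) * qBinom q (j+m) j := by
  have hq' : q⁻¹ ≠ 0 := inv_ne_zero hq
  unfold qBinom
  rw [Nat.add_sub_cancel_left]
  rw [poch_inv q⁻¹ hq' (j+m), poch_inv q⁻¹ hq' m, poch_inv q⁻¹ hq' j, inv_inv]
  rw [div_split]
  have h2 : (-1:ℂ)^m * (q⁻¹)^((m+1).choose 2) ≠ 0 :=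
    mul_ne_zero (by simp) (pow_ne_zero _ hq')
  have h3 : (-1:ℂ)^j * (q⁻¹)^((j+1).choose 2) ≠ 0 :=
    mul_ne_zero (by simp) (pow_ne_zero _ hq')
  have hch : (j+m+1).choose 2 = j*m + (m+1).choose 2 + (j+1).choose 2 := by
    rw [show j+m+1 = (j+1)+m by omega, choose2_add, choose2_succ m, choose2_succ j]
    ring
  have hc : ((-1:ℂ)^(j+m) * (q⁻¹)^((j+m+1).choose 2)) /
      ((-1:ℂ)^m * (q⁻¹)^((m+1).choose 2) * ((-1:ℂ)^j * (q⁻¹)^((j+1).choose 2))) = (q⁻¹)^(j*m) := by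
    rw [div_eq_iff (mul_ne_zero h2 h3), hch, pow_add, pow_add, pow_add]
    ring
  rw [hc]

theorem stmt3 (q x y a : ℂ) (hq : q ≠ 0) (ha : a ≠ 0) (n : ℕ) :
    ascU q x y a n = (-1) ^ n * q ^ Nat.choose n 2 * a ^ n * rsH q⁻¹ (y / a) (x / a) n := by
  unfold ascU rsH
  rw [Finset.mul_sum]
  rw [← Finset.sum_range_reflect]
  apply Finset.sum_congr rfl
  intro k hk
  have hkn : k ≤ n := Nat.lt_succ_iff.mp (Finset.mem_range.mp hk)
  obtain ⟨m, rfl⟩ : ∃ m, n = k + m := ⟨n - k, by omega⟩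
  rw [show k + m + 1 - 1 - k = m by omega, show k + m - m = k by omega]
  rw [qBinom_symm, qBinom_inv q hq, cauchy_inv q x y a hq ha k]
  rw [choose2_add, pow_add, pow_add, pow_add]
  generalize qBinom q (k+m) k = B
  generalize cauchyP q⁻¹ (y/a) (x/a) k = C
  rw [inv_pow]
  field_simp
  ring
end
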